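/- Let G be an infinite FC-group with finitely many automorphism orbits. Then G decomposes as G = Tor(G) × D, where Tor(G) is the (characteristic) torsion subgroup of G and D is a torsion-free divisible characteristic subgroup contained in the center Z(G). -/

import Mathlib

/-- The number of automorphism orbits of a group `G`: the number of orbits of the
natural action of `Aut(G)` on `G`. -/
noncomputable def omegaOrbits (G : Type*) [Group G] : ℕ :=
  Nat.card (Quotient (MulAction.orbitRel (MulAut G) G))

/-- `G` is an FC-group: every element has a finite conjugacy class. -/
def IsFCGroup (G : Type*) [Group G] : Prop :=
  ∀ g : G, {h : G | IsConj g h}.Finite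

/-- `G` has finitely many automorphism orbits. -/
def HasFinitelyManyAutOrbits (G : Type*) [Group G] : Prop :=
  Finite (Quotient (MulAction.orbitRel (MulAut G) G))

open scoped commutatorElement

section Aux

variable {G : Type*} [Group G]

/-- Multiplying the left entry of a commutator by a central element does not change it. -/
private lemma aux_comm_left (x y z : G) (hz : z ∈ Subgroup.center G) :
    ⁅x * z, y⁆ = ⁅x, y⁆ := by
  have hz' : ∀ a : G, z * a = a * z := fun a => (Subgroup.mem_center_iff.mp hz a).symm
  simp only [commutatorElement_def, mul_inv_rev]
  rw [mul_assoc x z y, hz' y, ← mul_assoc x y z, mul_assoc (x*y) z (z⁻¹*x⁻¹),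
    ← mul_assoc z z⁻¹ x⁻¹, mul_inv_cancel, one_mul]

private lemma aux_comm_right (x y w : G) (hw : w ∈ Subgroup.center G) :
    ⁅x, y * w⁆ = ⁅x, y⁆ := by
  have hw' : ∀ a : G, w * a = a * w := fun a => (Subgroup.mem_center_iff.mp hw a).symm
  simp only [commutatorElement_def, mul_inv_rev]
  rw [← mul_assoc x y w, mul_assoc (x*y) w x⁻¹, hw' x⁻¹, ← mul_assoc (x*y) x⁻¹ w,
    mul_assoc (x*y*x⁻¹) w (w⁻¹*y⁻¹), ← mul_assoc w w⁻¹ y⁻¹, mul_inv_cancel, one_mul]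

/-- If the center has finite index, the set of commutators is finite. -/
private lemma aux_commutatorSet_finite (hfin : Finite (G ⧸ Subgroup.center G)) :
    Finite (commutatorSet G) := by
  classical
  set Z := Subgroup.center G
  have wd : ∀ (a₁ b₁ a₂ b₂ : G), (QuotientGroup.leftRel Z) a₁ a₂ →
      (QuotientGroup.leftRel Z) b₁ b₂ → ⁅a₁, b₁⁆ = ⁅a₂, b₂⁆ := by
    intro a₁ b₁ a₂ b₂ ha hb
    rw [QuotientGroup.leftRel_apply] at ha hb
    have ha2 : a₂ = a₁ * (a₁⁻¹ * a₂) := by group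
    have hb2 : b₂ = b₁ * (b₁⁻¹ * b₂) := by group
    rw [ha2, hb2, aux_comm_left _ _ _ ha, aux_comm_right _ _ _ hb]
  let f : (G ⧸ Z) → (G ⧸ Z) → G := fun qa qb =>
    Quotient.liftOn₂ qa qb (fun a b => ⁅a, b⁆) (fun a₁ b₁ a₂ b₂ h1 h2 => wd a₁ b₁ a₂ b₂ h1 h2)
  have hsub : commutatorSet G ⊆ Set.range (fun p : (G ⧸ Z) × (G ⧸ Z) => f p.1 p.2) := by
    rintro c ⟨a, b, rfl⟩
    exact ⟨(↑a, ↑b), rfl⟩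
  exact Set.Finite.to_subtype ((Set.finite_range _).subset hsub)

/-- In an FC-group, the centralizer of (the powers of) an element has finite index. -/
private lemma aux_fc_finite_quotient (hFC : IsFCGroup G) (g : G) :
    Finite (G ⧸ Subgroup.centralizer (Subgroup.zpowers g : Set G)) := by
  have horb : (MulAction.orbit (ConjAct G) g).Finite := by
    apply (hFC g).subset
    rintro x ⟨c, rfl⟩
    exact isConj_iff.mpr ⟨ConjAct.ofConjAct c, (ConjAct.smul_def c g).symm⟩
  have e : MulAction.orbit (ConjAct G) g ≃ G ⧸ Subgroup.centralizer (Subgroup.zpowers g : Set G) :=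
    (MulAction.orbitEquivQuotientStabilizer (ConjAct G) g).trans
      (Subgroup.quotientEquivOfEq ((ConjAct.stabilizer_eq_centralizer g).trans (by
        rw [Subgroup.zpowers_eq_closure, Subgroup.centralizer_closure]; rfl)))
  haveI := horb.to_subtype
  exact Finite.of_equiv _ e

/-- An `Aut`-invariant natural-valued function on a group with finitely many
automorphism orbits is bounded. -/
private lemma aux_bounded (hfin : HasFinitelyManyAutOrbits G) (f : G → ℕ)
    (hf : ∀ (φ : MulAut G) (g : G), f (φ g) = f g) : ∃ b : ℕ, ∀ g : G, f g ≤ b := by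
  haveI : Finite (Quotient (MulAction.orbitRel (MulAut G) G)) := hfin
  have key : ∀ a b : G, (MulAction.orbitRel (MulAut G) G) a b → f a = f b := by
    intro a b hab
    rw [MulAction.orbitRel_apply, MulAction.mem_orbit_iff] at hab
    obtain ⟨φ, rfl⟩ := hab
    exact hf φ b
  let F : Quotient (MulAction.orbitRel (MulAut G) G) → ℕ := Quotient.lift f key
  obtain ⟨b, hb⟩ := (Set.finite_range F).bddAbove
  exact ⟨b, fun g => hb ⟨Quotient.mk _ g, rfl⟩⟩

private lemma aux_index_bound (hFC : IsFCGroup G) (hfin : HasFinitelyManyAutOrbits G) :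
    ∃ b : ℕ, ∀ g : G,
      (Subgroup.centralizer (Subgroup.zpowers g : Set G)).index ≤ b ∧
      (Subgroup.centralizer (Subgroup.zpowers g : Set G)).index ≠ 0 := by
  have hinv : ∀ (φ : MulAut G) (g : G),
      (Subgroup.centralizer (Subgroup.zpowers (φ g) : Set G)).index
        = (Subgroup.centralizer (Subgroup.zpowers g : Set G)).index := by
    intro φ g
    have hcomap : (Subgroup.centralizer (Subgroup.zpowers (φ g) : Set G)).comap φ.toMonoidHom
        = Subgroup.centralizer (Subgroup.zpowers g : Set G) := by
      ext x
      simp only [Subgroup.mem_comap, MulEquiv.coe_toMonoidHom, Subgroup.mem_centralizer_iff]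
      constructor
      · intro h k hk
        obtain ⟨n, rfl⟩ := Subgroup.mem_zpowers_iff.mp hk
        have := h ((φ g) ^ n) (Subgroup.mem_zpowers_iff.mpr ⟨n, rfl⟩)
        apply φ.injective
        simpa [map_mul, map_zpow] using this
      · intro h k hk
        obtain ⟨n, rfl⟩ := Subgroup.mem_zpowers_iff.mp hk
        have := h (g ^ n) (Subgroup.mem_zpowers_iff.mpr ⟨n, rfl⟩)
        rw [← map_zpow, ← map_mul, ← map_mul, this]
    have hsurj : Function.Surjective ⇑(φ.toMonoidHom) := φ.surjective
    have hidx := Subgroup.index_comap_of_surjective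
      (Subgroup.centralizer (Subgroup.zpowers (φ g) : Set G)) hsurj
    rw [hcomap] at hidx
    exact hidx.symm
  obtain ⟨b, hb⟩ := aux_bounded hfin
    (fun g => (Subgroup.centralizer (Subgroup.zpowers g : Set G)).index) hinv
  refine ⟨b, fun g => ⟨hb g, ?_⟩⟩
  haveI := aux_fc_finite_quotient hFC g
  exact Subgroup.index_ne_zero_of_finite

/-- Uniform centrality of powers: there is `m > 0` with `g ^ m` central for all `g`. -/
private lemma aux_pow_central (hFC : IsFCGroup G) (hfin : HasFinitelyManyAutOrbits G) :
    ∃ m : ℕ, 0 < m ∧ ∀ g : G, g ^ m ∈ Subgroup.center G := by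
  classical
  obtain ⟨b, hb⟩ := aux_index_bound hFC hfin
  refine ⟨(b * b).factorial, Nat.factorial_pos _, fun y => ?_⟩
  rw [Subgroup.mem_center_iff]
  intro h
  set K := Subgroup.centralizer (Subgroup.zpowers y : Set G) ⊓
    Subgroup.centralizer (Subgroup.zpowers h : Set G) with hK
  have hK0 : K.index ≠ 0 := Subgroup.index_inf_ne_zero (hb y).2 (hb h).2
  have hKle : K.index ≤ b * b :=
    le_trans Subgroup.index_inf_le (Nat.mul_le_mul (hb y).1 (hb h).1)
  haveI : Fintype (G ⧸ K) := Subgroup.fintypeOfIndexNeZero hK0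
  have hcard : Fintype.card (G ⧸ K) ≤ b * b := by
    rw [← Nat.card_eq_fintype_card, ← Subgroup.index_eq_card]; exact hKle
  have hperm : orderOf (MulAction.toPermHom G (G ⧸ K) y) ∣ (b * b).factorial := by
    refine dvd_trans orderOf_dvd_card ?_
    rw [Fintype.card_perm]
    exact Nat.factorial_dvd_factorial hcard
  have hσ : (MulAction.toPermHom G (G ⧸ K)) (y ^ (b * b).factorial) = 1 := by
    rw [map_pow]
    exact orderOf_dvd_iff_pow_eq_one.mp hperm
  have hfix : (y ^ (b * b).factorial) • ((1 : G) : G ⧸ K) = ((1 : G) : G ⧸ K) := by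
    have := congrArg (fun σ : Equiv.Perm (G ⧸ K) => σ ((1 : G) : G ⧸ K)) hσ
    simpa using this
  have hyK : y ^ (b * b).factorial ∈ K := by
    rw [MulAction.Quotient.smul_mk] at hfix
    have := QuotientGroup.eq.mp hfix
    simpa using this
  have := (Subgroup.mem_inf.mp hyK).2
  exact (Subgroup.mem_centralizer_iff.mp this h (Subgroup.mem_zpowers h))

/-- Automorphisms preserve finiteness of order. -/
private lemma aux_aut_torsion (φ : G ≃* G) (g : G) :
    IsOfFinOrder (φ g) ↔ IsOfFinOrder g := by
  constructor <;> intro h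
  · rw [isOfFinOrder_iff_pow_eq_one] at h ⊢
    obtain ⟨n, hn, h1⟩ := h
    refine ⟨n, hn, φ.injective ?_⟩
    rw [map_pow, map_one, h1]
  · rw [isOfFinOrder_iff_pow_eq_one] at h ⊢
    obtain ⟨n, hn, h1⟩ := h
    exact ⟨n, hn, by rw [← map_pow, h1, map_one]⟩

/-- Uniform exponent for torsion elements. -/
private lemma aux_exponent (hfin : HasFinitelyManyAutOrbits G) :
    ∃ e : ℕ, 0 < e ∧ ∀ g : G, IsOfFinOrder g → g ^ e = 1 := by
  obtain ⟨b, hb⟩ := aux_bounded hfin orderOf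
    (fun φ g => orderOf_injective φ.toMonoidHom φ.injective g)
  refine ⟨b.factorial, Nat.factorial_pos _, fun g hg => ?_⟩
  rw [← orderOf_dvd_iff_pow_eq_one]
  exact Nat.dvd_factorial hg.orderOf_pos (hb g)

/-- For any two elements of an FC-group, the 2-generated subgroup they generate has
center of finite index. -/
private lemma aux_two_gen (hFC : IsFCGroup G) (x y : G) :
    Finite (↥(Subgroup.closure {x, y}) ⧸ Subgroup.center ↥(Subgroup.closure {x, y})) := by
  set H := Subgroup.closure {x, y}
  set K := Subgroup.centralizer (Subgroup.zpowers x : Set G) ⊓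
    Subgroup.centralizer (Subgroup.zpowers y : Set G) with hKdef
  have hK0 : K.index ≠ 0 := by
    haveI := aux_fc_finite_quotient hFC x
    haveI := aux_fc_finite_quotient hFC y
    exact Subgroup.index_inf_ne_zero Subgroup.index_ne_zero_of_finite
      Subgroup.index_ne_zero_of_finite
  have hrel : (K.subgroupOf H).index ≠ 0 := by
    intro h0
    exact hK0 (Subgroup.index_eq_zero_of_relIndex_eq_zero h0)
  have hle : K.subgroupOf H ≤ Subgroup.center ↥H := by
    rintro ⟨z, hzH⟩ hz
    rw [Subgroup.mem_subgroupOf] at hz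
    rw [Subgroup.mem_center_iff]
    intro ⟨h', hh'⟩
    have hcomm : h' ∈ Subgroup.centralizer ({z} : Set G) := by
      have : H ≤ Subgroup.centralizer ({z} : Set G) := by
        rw [Subgroup.closure_le]
        rintro a (rfl | rfl)
        · exact Subgroup.mem_centralizer_iff.mpr (by
            rintro c (rfl : c = z)
            exact (Subgroup.mem_centralizer_iff.mp (Subgroup.mem_inf.mp hz).1 a
              (Subgroup.mem_zpowers a)).symm)
        · exact Subgroup.mem_centralizer_iff.mpr (by
            rintro c (rfl : c = z)
            exact (Subgroup.mem_centralizer_iff.mp (Subgroup.mem_inf.mp hz).2 a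
              (Subgroup.mem_zpowers a)).symm)
      exact this hh'
    have := Subgroup.mem_centralizer_iff.mp hcomm z rfl
    exact Subtype.ext (by simpa using this.symm)
  have hcent : (Subgroup.center ↥H).index ≠ 0 := by
    intro h0
    have hdvd := Subgroup.index_dvd_of_le hle
    rw [h0] at hdvd
    exact hrel (Nat.eq_zero_of_zero_dvd hdvd)
  haveI : (Subgroup.center ↥H).FiniteIndex := ⟨hcent⟩
  exact Subgroup.finite_quotient_of_finiteIndex

private lemma aux_coe_isOfFinOrder {H : Subgroup G} (a : ↥H) :
    IsOfFinOrder (a : G) ↔ IsOfFinOrder a := by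
  constructor <;> intro h <;> rw [isOfFinOrder_iff_pow_eq_one] at h ⊢
  · obtain ⟨n, hn, h1⟩ := h
    refine ⟨n, hn, ?_⟩
    ext
    simpa using h1
  · obtain ⟨n, hn, h1⟩ := h
    refine ⟨n, hn, ?_⟩
    have := congrArg (Subtype.val) h1
    simpa using this

/-- In an FC-group every commutator has finite order. -/
private lemma aux_commutator_torsion (hFC : IsFCGroup G) (x y : G) :
    IsOfFinOrder ⁅x, y⁆ := by
  set H := Subgroup.closure ({x, y} : Set G) with hH
  haveI := aux_two_gen hFC x y
  haveI := aux_commutatorSet_finite (G := ↥H) inferInstance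
  haveI : Finite (_root_.commutator ↥H) := inferInstance
  have hx : x ∈ H := Subgroup.subset_closure (by simp)
  have hy : y ∈ H := Subgroup.subset_closure (by simp)
  set x' : ↥H := ⟨x, hx⟩
  set y' : ↥H := ⟨y, hy⟩
  have hc : ⁅x', y'⁆ ∈ _root_.commutator ↥H := by
    rw [commutator_def]
    exact Subgroup.commutator_mem_commutator (Subgroup.mem_top _) (Subgroup.mem_top _)
  have h1 : IsOfFinOrder (⟨⁅x', y'⁆, hc⟩ : _root_.commutator ↥H) := isOfFinOrder_of_finite _
  have h2 : IsOfFinOrder ⁅x', y'⁆ := by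
    have := (aux_coe_isOfFinOrder (⟨⁅x', y'⁆, hc⟩ : _root_.commutator ↥H)).mpr h1
    simpa using this
  have h3 : IsOfFinOrder ((⁅x', y'⁆ : ↥H) : G) := (aux_coe_isOfFinOrder _).mpr h2
  have : ((⁅x', y'⁆ : ↥H) : G) = ⁅x, y⁆ := by
    simp [commutatorElement_def, x', y']
  rwa [this] at h3

/-- In an FC-group the product of torsion elements is torsion. -/
private lemma aux_mul_torsion (hFC : IsFCGroup G) {x y : G}
    (hx : IsOfFinOrder x) (hy : IsOfFinOrder y) : IsOfFinOrder (x * y) := by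
  set H := Subgroup.closure ({x, y} : Set G) with hH
  haveI := aux_two_gen hFC x y
  haveI := aux_commutatorSet_finite (G := ↥H) inferInstance
  haveI : Finite (_root_.commutator ↥H) := inferInstance
  have hxm : x ∈ H := Subgroup.subset_closure (by simp)
  have hym : y ∈ H := Subgroup.subset_closure (by simp)
  set x' : ↥H := ⟨x, hxm⟩
  set y' : ↥H := ⟨y, hym⟩
  have hx' : IsOfFinOrder x' := (aux_coe_isOfFinOrder x').mp hx
  have hy' : IsOfFinOrder y' := (aux_coe_isOfFinOrder y').mp hy
  have hab : IsOfFinOrder (Abelianization.of x' * Abelianization.of y') :=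
    (Commute.all _ _).isOfFinOrder_mul (Abelianization.of.isOfFinOrder hx')
      (Abelianization.of.isOfFinOrder hy')
  rw [← map_mul] at hab
  obtain ⟨k, hk, hk1⟩ := isOfFinOrder_iff_pow_eq_one.mp hab
  rw [← map_pow] at hk1
  have hker : (x' * y') ^ k ∈ _root_.commutator ↥H := by
    have : ((((x' * y') ^ k : ↥H)) : ↥H ⧸ _root_.commutator ↥H) = 1 := hk1
    exact (QuotientGroup.eq_one_iff _).mp this
  have h1 : IsOfFinOrder (⟨(x' * y') ^ k, hker⟩ : _root_.commutator ↥H) :=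
    isOfFinOrder_of_finite _
  have h2 : IsOfFinOrder ((x' * y') ^ k) := by
    have := (aux_coe_isOfFinOrder (⟨(x' * y') ^ k, hker⟩ : _root_.commutator ↥H)).mpr h1
    simpa using this
  have h3 : IsOfFinOrder (x' * y') := h2.of_pow hk.ne'
  have := (aux_coe_isOfFinOrder (x' * y')).mpr h3
  simpa using this


/-- The torsion subgroup of an FC-group. -/
private def torsionSub (hFC : IsFCGroup G) : Subgroup G where
  carrier := {g : G | IsOfFinOrder g}
  one_mem' := IsOfFinOrder.one
  mul_mem' := fun ha hb => aux_mul_torsion hFC ha hb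
  inv_mem' := fun h => h.inv

private lemma mem_torsionSub (hFC : IsFCGroup G) {g : G} :
    g ∈ torsionSub hFC ↔ IsOfFinOrder g := Iff.rfl

private lemma aux_T_normal (hFC : IsFCGroup G) : (torsionSub hFC).Normal := by
  constructor
  intro n hn g
  have := (aux_aut_torsion (MulAut.conj g) n).mpr hn
  rwa [MulAut.conj_apply] at this

/-- Divisibility modulo torsion: every element is an `n`-th power modulo torsion. -/
private lemma aux_div (hFC : IsFCGroup G) (hfin : HasFinitelyManyAutOrbits G)
    (g : G) (n : ℕ) (hn : 0 < n) :
    ∃ u t : G, IsOfFinOrder t ∧ u ^ n * t = g := by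
  haveI : Finite (Quotient (MulAction.orbitRel (MulAut G) G)) := hfin
  haveI : (torsionSub hFC).Normal := aux_T_normal hFC
  set T := torsionSub hFC with hTdef
  -- the quotient is commutative
  have hcomm : ∀ a b : G ⧸ T, a * b = b * a := by
    intro a b
    refine QuotientGroup.induction_on a fun x => QuotientGroup.induction_on b fun y => ?_
    rw [← QuotientGroup.mk_mul, ← QuotientGroup.mk_mul, QuotientGroup.eq]
    have hid : (x * y)⁻¹ * (y * x) = ⁅y⁻¹, x⁻¹⁆ := by
      rw [commutatorElement_def]; group
    rw [hid]
    exact aux_commutator_torsion hFC y⁻¹ x⁻¹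
  -- the quotient has unique roots
  have hcancel : ∀ (a b : G ⧸ T) (k : ℕ), 0 < k → a ^ k = b ^ k → a = b := by
    intro a b k hk hab
    have hC : Commute a⁻¹ b := hcomm a⁻¹ b
    have hc : (a⁻¹ * b) ^ k = 1 := by
      rw [hC.mul_pow, inv_pow, hab, inv_mul_cancel]
    have h1 : a⁻¹ * b = 1 := by
      refine QuotientGroup.induction_on (C := fun q => q ^ k = 1 → q = 1) (a⁻¹ * b) ?_ hc
      intro z hz
      rw [← QuotientGroup.mk_pow, QuotientGroup.eq_one_iff] at hz
      rw [QuotientGroup.eq_one_iff]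
      exact (hz : IsOfFinOrder (z ^ k)).of_pow hk.ne'
    exact inv_mul_eq_one.mp h1
  -- pigeonhole on the powers g ^ (n ^ i)
  have key : ∀ i j : ℕ, i < j →
      (Quotient.mk (MulAction.orbitRel (MulAut G) G) (g ^ n ^ i)
        = Quotient.mk (MulAction.orbitRel (MulAut G) G) (g ^ n ^ j)) →
      ∃ u t : G, IsOfFinOrder t ∧ u ^ n * t = g := by
    intro i j hij heq
    have hrel := Quotient.exact heq
    have hrel' : g ^ n ^ i ∈ MulAction.orbit (MulAut G) (g ^ n ^ j) := hrel
    obtain ⟨φ, hφ⟩ := MulAction.mem_orbit_iff.mp hrel'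
    have hpow : (φ g) ^ n ^ j = g ^ n ^ i := by
      rw [← map_pow]
      exact hφ
    have hq : ((φ g : G) : G ⧸ T) ^ n ^ j = ((g : G) : G ⧸ T) ^ n ^ i := by
      rw [← QuotientGroup.mk_pow, ← QuotientGroup.mk_pow, hpow]
    have hexp : n ^ (j - i) * n ^ i = n ^ j := by
      rw [← pow_add]
      congr 1
      omega
    have hA : (((φ g) ^ n ^ (j - i) : G) : G ⧸ T) = ((g : G) : G ⧸ T) := by
      apply hcancel _ _ (n ^ i) (pow_pos hn i)
      calc (((φ g) ^ n ^ (j - i) : G) : G ⧸ T) ^ n ^ i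
          = ((((φ g) ^ n ^ (j - i)) ^ n ^ i : G) : G ⧸ T) :=
            (QuotientGroup.mk_pow T _ _).symm
        _ = (((φ g) ^ n ^ j : G) : G ⧸ T) := by rw [← pow_mul, hexp]
        _ = ((g ^ n ^ i : G) : G ⧸ T) := by rw [hpow]
        _ = ((g : G) : G ⧸ T) ^ n ^ i := QuotientGroup.mk_pow T _ _
    have ht : ((φ g) ^ n ^ (j - i))⁻¹ * g ∈ T := QuotientGroup.eq.mp hA
    have hexp2 : n ^ (j - i - 1) * n = n ^ (j - i) := by
      rw [← pow_succ]
      congr 1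
      omega
    refine ⟨(φ g) ^ n ^ (j - i - 1), ((φ g) ^ n ^ (j - i))⁻¹ * g, ht, ?_⟩
    rw [← pow_mul, hexp2, mul_inv_cancel_left]
  obtain ⟨i, j, hij, hfeq⟩ := Finite.exists_ne_map_eq_of_infinite
    (fun i : ℕ => Quotient.mk (MulAction.orbitRel (MulAut G) G) (g ^ n ^ i))
  rcases lt_or_gt_of_ne hij with h | h
  · exact key i j h hfeq
  · exact key j i h hfeq.symm

end Aux

theorem stmt8 (G : Type*) [Group G] [Infinite G] (hFC : IsFCGroup G)
    (hfin : HasFinitelyManyAutOrbits G) :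
    ∃ T D : Subgroup G, (T : Set G) = {g : G | IsOfFinOrder g} ∧
      T.Characteristic ∧ D.Characteristic ∧ D ≤ Subgroup.center G ∧
      (∀ d ∈ D, d ≠ 1 → ¬ IsOfFinOrder d) ∧
      (∀ d ∈ D, ∀ n : ℕ, 0 < n → ∃ x ∈ D, x ^ n = d) ∧
      T ⊓ D = ⊥ ∧ T ⊔ D = ⊤ := by
  classical
  obtain ⟨m, hm0, hmc⟩ := aux_pow_central hFC hfin
  obtain ⟨e, he0, he1⟩ := aux_exponent hfin
  refine ⟨torsionSub hFC,
    { carrier := {x : G | ∃ z : G, z ∈ Subgroup.center G ∧ z ^ e = x}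
      one_mem' := ⟨1, Subgroup.one_mem _, one_pow e⟩
      mul_mem' := ?_
      inv_mem' := ?_ }, rfl, ?_, ?_, ?_, ?_, ?_, ?_, ?_⟩
  · -- mul_mem'
    rintro a b ⟨z1, hz1, rfl⟩ ⟨z2, hz2, rfl⟩
    have hC : Commute z1 z2 := Subgroup.mem_center_iff.mp hz2 z1
    exact ⟨z1 * z2, mul_mem hz1 hz2, by rw [hC.mul_pow]⟩
  · -- inv_mem'
    rintro a ⟨z, hz, rfl⟩
    exact ⟨z⁻¹, inv_mem hz, by rw [inv_pow]⟩
  · -- T characteristic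
    rw [Subgroup.characteristic_iff_comap_eq]
    intro φ
    ext x
    simp only [Subgroup.mem_comap]
    exact aux_aut_torsion φ x
  · -- D characteristic
    rw [Subgroup.characteristic_iff_comap_eq]
    intro φ
    ext x
    simp only [Subgroup.mem_comap]
    constructor
    · rintro ⟨z, hz, hze⟩
      refine ⟨φ.symm z, ?_, ?_⟩
      · rw [Subgroup.mem_center_iff]
        intro gg
        apply φ.injective
        simp only [map_mul, MulEquiv.apply_symm_apply]
        exact Subgroup.mem_center_iff.mp hz (φ gg)
      · apply φ.injective
        rw [map_pow, MulEquiv.apply_symm_apply]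
        exact hze
    · rintro ⟨z, hz, rfl⟩
      refine ⟨φ z, ?_, ?_⟩
      · rw [Subgroup.mem_center_iff]
        intro gg
        have := congrArg φ (Subgroup.mem_center_iff.mp hz (φ.symm gg))
        simpa [map_mul] using this
      · rw [← map_pow]
        rfl
  · -- D ≤ center
    rintro x ⟨z, hz, rfl⟩
    exact pow_mem hz e
  · -- torsion-free
    rintro d ⟨z, hz, rfl⟩ hne hfo
    exact hne (by rw [he1 z (hfo.of_pow he0.ne')])
  · -- divisibility
    rintro d ⟨z, hz, rfl⟩ n hn
    obtain ⟨u, t, ht, hut⟩ := aux_div hFC hfin z (n * e * m) (by positivity)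
    have hyc : u ^ m ∈ Subgroup.center G := hmc u
    have h1 : (u ^ m) ^ (n * e) = u ^ (n * e * m) := by
      rw [← pow_mul]
      congr 1
      ring
    have hz2 : (u ^ m) ^ (n * e) * t = z := by rw [h1]; exact hut
    have ht' : t = ((u ^ m) ^ (n * e))⁻¹ * z := by
      rw [← hz2]; group
    have htors : t ^ e = 1 := he1 t ht
    have hcentpow : ((u ^ m) ^ (n * e))⁻¹ ∈ Subgroup.center G := inv_mem (pow_mem hyc _)
    have hC : Commute (((u ^ m) ^ (n * e))⁻¹) z :=
      (Subgroup.mem_center_iff.mp hcentpow z).symm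
    have hze : z ^ e = ((u ^ m) ^ (n * e)) ^ e := by
      have := htors
      rw [ht', hC.mul_pow] at this
      have h2 : (((u ^ m) ^ (n * e)) ^ e)⁻¹ * z ^ e = 1 := by
        rw [← inv_pow]; exact this
      have := inv_mul_eq_one.mp h2
      exact this.symm
    refine ⟨(u ^ m) ^ (e * e), ⟨(u ^ m) ^ e, pow_mem hyc e, (pow_mul _ e e).symm⟩, ?_⟩
    rw [hze, ← pow_mul (u ^ m) (e * e) n, ← pow_mul (u ^ m) (n * e) e]
    have harith : e * e * n = n * e * e := by ring
    rw [harith]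
  · -- inf
    refine le_antisymm ?_ bot_le
    rintro x ⟨hT, z, hz, rfl⟩
    have : z ^ e = 1 := he1 z ((hT : IsOfFinOrder (z ^ e)).of_pow he0.ne')
    simpa [Subgroup.mem_bot] using this
  · -- sup
    rw [eq_top_iff]
    intro g _
    obtain ⟨u, t, ht, hut⟩ := aux_div hFC hfin g (m * e) (by positivity)
    have hgd : (u ^ m) ^ e * t = g := by rw [← pow_mul]; exact hut
    rw [← hgd]
    exact mul_mem
      (Subgroup.mem_sup_right ⟨u ^ m, hmc u, rfl⟩)
      (Subgroup.mem_sup_left ht)
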